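/- Let (Z_t)_{t ∈ ℤ} be a stationary 𝒵-valued process with β-mixing coefficients β(k), let a, μ' ≥ 1 be integers, let M > 0, let B and p be positive integers, and let ℱ be a finite set of measurable functions from 𝒵 to [0, M] with cardinality at most 2^{Bp}. For each ℓ_f ∈ ℱ set L(f) = E[ℓ_f(Z_1)] and L̂^spaced(f) = (1/μ') Σ_{k=1}^{μ'} ℓ_f(Z_{1+(k−1)a}). Let δ ∈ (0,1) be such that δ'' = δ − (μ' − 1)β(a) > 0, and set A = Bp·ln 2 + ln(1/δ''). Then with probability at least 1 − δ, simultaneously for all ℓ_f ∈ ℱ: L(f) ≤ L̂^spaced(f) + √( 2 M A · L̂^spaced(f) / μ' ) + 4 M A / μ'. -/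

import Mathlib

open MeasureTheory ProbabilityTheory

/-- Total variation distance between two measures. -/
noncomputable def tvDist {α : Type*} [MeasurableSpace α] (μ ν : Measure α) : ℝ :=
  ⨆ A : {A : Set α // MeasurableSet A}, |(μ A).toReal - (ν A).toReal|

/-- β-mixing coefficient of the process `Z` under `P`: the supremum over `t` of the
total variation distance between the joint law of `((Z s)_{s ≤ t}, (Z s)_{s ≥ t+k})`
and the product of the marginal laws. -/
noncomputable def betaMix {Ω 𝒵 : Type*} [MeasurableSpace Ω] [MeasurableSpace 𝒵]
    (P : Measure Ω) (Z : ℤ → Ω → 𝒵) (k : ℕ) : ℝ :=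
  ⨆ t : ℤ, tvDist
    (P.map (fun ω => (fun s : {s : ℤ // s ≤ t} => Z s ω,
                      fun s : {s : ℤ // t + k ≤ s} => Z s ω)))
    ((P.map (fun ω => fun s : {s : ℤ // s ≤ t} => Z s ω)).prod
      (P.map (fun ω => fun s : {s : ℤ // t + k ≤ s} => Z s ω)))

/-- Stationarity of the process `Z` under `P`. -/
def Stationary {Ω 𝒵 : Type*} [MeasurableSpace Ω] [MeasurableSpace 𝒵]
    (P : Measure Ω) (Z : ℤ → Ω → 𝒵) : Prop :=
  ∀ s : ℤ, P.map (fun ω => fun t : ℤ => Z (t + s) ω) = P.map (fun ω => fun t : ℤ => Z t ω)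



lemma exp_neg_le_quadratic {x : ℝ} (hx : 0 ≤ x) :
    Real.exp (-x) ≤ 1 - x + x ^ 2 / 2 := by
  have hmono : Monotone (fun y : ℝ => 1 - y + y ^ 2 / 2 - Real.exp (-y)) := by
    have hdiff : Differentiable ℝ (fun y : ℝ => 1 - y + y ^ 2 / 2 - Real.exp (-y)) := by
      fun_prop
    refine monotone_of_deriv_nonneg hdiff ?_
    intro y
    have hexp : HasDerivAt (fun y : ℝ => Real.exp (-y)) (Real.exp (-y) * (-1)) y := by
      simpa [Function.comp_def] using (Real.hasDerivAt_exp (-y)).comp y ((hasDerivAt_id y).neg)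
    have h1 : HasDerivAt (fun y : ℝ => 1 - y + y ^ 2 / 2 - Real.exp (-y))
        (0 - 1 + (2 : ℕ) * y ^ (2 - 1) / 2 - Real.exp (-y) * (-1)) y :=
      (((hasDerivAt_const y (1:ℝ)).sub (hasDerivAt_id y)).add
        (((hasDerivAt_pow 2 y)).div_const 2)).sub hexp
    rw [h1.deriv]
    have := Real.add_one_le_exp (-y)
    nlinarith [this]
  have h0 : (fun y : ℝ => 1 - y + y ^ 2 / 2 - Real.exp (-y)) 0 = 0 := by simp
  have := hmono hx
  simp only [h0] at this
  linarith [this]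

lemma quad_bound {u x b : ℝ} (hu : 0 ≤ u) (hx : 0 ≤ x) (hb : 0 ≤ b)
    (h : u ^ 2 ≤ x + b * u) : u ^ 2 ≤ x + b * Real.sqrt x + 2 * b ^ 2 := by
  have hsx : Real.sqrt x ^ 2 = x := Real.sq_sqrt hx
  have hsxn : 0 ≤ Real.sqrt x := Real.sqrt_nonneg x
  have h1 : u ≤ Real.sqrt x + b := by
    by_contra h2
    push_neg at h2
    nlinarith
  nlinarith [mul_le_mul_of_nonneg_left h1 hb]


section TV
variable {α : Type*} [MeasurableSpace α] (μ ν : Measure α)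
  [IsProbabilityMeasure μ] [IsProbabilityMeasure ν]

lemma tvDist_bddAbove : BddAbove (Set.range
    fun A : {A : Set α // MeasurableSet A} => |(μ A).toReal - (ν A).toReal|) := by
  refine ⟨2, ?_⟩
  rintro x ⟨A, rfl⟩
  have h1 : (μ ↑A).toReal ≤ 1 := by
    have := prob_le_one (μ := μ) (s := A)
    simpa using ENNReal.toReal_mono ENNReal.one_ne_top this
  have h2 : (ν ↑A).toReal ≤ 1 := by
    have := prob_le_one (μ := ν) (s := A)
    simpa using ENNReal.toReal_mono ENNReal.one_ne_top this
  have h3 : (0:ℝ) ≤ (μ ↑A).toReal := ENNReal.toReal_nonneg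
  have h4 : (0:ℝ) ≤ (ν ↑A).toReal := ENNReal.toReal_nonneg
  rw [abs_le]; constructor <;> linarith

lemma tvDist_nonneg : 0 ≤ tvDist μ ν := by
  have := le_ciSup (tvDist_bddAbove μ ν) (⟨∅, MeasurableSet.empty⟩ : {A : Set α // MeasurableSet A})
  simpa [tvDist] using this

lemma tvDist_le_two : tvDist μ ν ≤ 2 := by
  refine ciSup_le ?_
  rintro ⟨A, hA⟩
  have h1 : (μ A).toReal ≤ 1 := by
    have := prob_le_one (μ := μ) (s := A)
    simpa using ENNReal.toReal_mono ENNReal.one_ne_top this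
  have h2 : (ν A).toReal ≤ 1 := by
    have := prob_le_one (μ := ν) (s := A)
    simpa using ENNReal.toReal_mono ENNReal.one_ne_top this
  have h3 : (0:ℝ) ≤ (μ A).toReal := ENNReal.toReal_nonneg
  have h4 : (0:ℝ) ≤ (ν A).toReal := ENNReal.toReal_nonneg
  rw [abs_le]; constructor <;> linarith

lemma meas_le_meas_add_tvDist {E : Set α} (hE : MeasurableSet E) {c : ℝ}
    (hc : tvDist μ ν ≤ c) : μ E ≤ ν E + ENNReal.ofReal c := by
  have h := le_ciSup (tvDist_bddAbove μ ν) (⟨E, hE⟩ : {A : Set α // MeasurableSet A})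
  have habs : |(μ E).toReal - (ν E).toReal| ≤ c := le_trans h hc
  have h1 : (μ E).toReal ≤ (ν E).toReal + c := by
    have := abs_le.mp habs
    linarith [this.2]
  calc μ E = ENNReal.ofReal (μ E).toReal := (ENNReal.ofReal_toReal (measure_ne_top μ E)).symm
    _ ≤ ENNReal.ofReal ((ν E).toReal + c) := ENNReal.ofReal_le_ofReal h1
    _ ≤ ENNReal.ofReal (ν E).toReal + ENNReal.ofReal c := ENNReal.ofReal_add_le
    _ = ν E + ENNReal.ofReal c := by rw [ENNReal.ofReal_toReal (measure_ne_top ν E)]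

end TV

section Beta
variable {Ω 𝒵 : Type*} [MeasurableSpace Ω] [MeasurableSpace 𝒵]
    (P : Measure Ω) [IsProbabilityMeasure P]
    (Z : ℤ → Ω → 𝒵) (hZmeas : ∀ t, Measurable (Z t))

include hZmeas

lemma meas_past_meas (t : ℤ) : Measurable (fun ω => fun s : {s : ℤ // s ≤ t} => Z s ω) :=
  measurable_pi_lambda _ fun s => hZmeas s

lemma meas_fut_meas (t : ℤ) (k : ℕ) :
    Measurable (fun ω => fun s : {s : ℤ // t + k ≤ s} => Z s ω) :=
  measurable_pi_lambda _ fun s => hZmeas s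

lemma pair_le_prod_add_beta (t : ℤ) (k : ℕ)
    {F : Set (({s : ℤ // s ≤ t} → 𝒵) × ({s : ℤ // t + k ≤ s} → 𝒵))}
    (hF : MeasurableSet F) :
    (P.map (fun ω => (fun s : {s : ℤ // s ≤ t} => Z s ω,
                      fun s : {s : ℤ // t + k ≤ s} => Z s ω))) F
      ≤ ((P.map (fun ω => fun s : {s : ℤ // s ≤ t} => Z s ω)).prod
          (P.map (fun ω => fun s : {s : ℤ // t + k ≤ s} => Z s ω))) F
        + ENNReal.ofReal (betaMix P Z k) := by
  haveI h1 : IsProbabilityMeasure (P.map (fun ω => (fun s : {s : ℤ // s ≤ t} => Z s ω,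
      fun s : {s : ℤ // t + k ≤ s} => Z s ω))) :=
    Measure.isProbabilityMeasure_map (((meas_past_meas Z hZmeas t).prodMk
      (meas_fut_meas Z hZmeas t k)).aemeasurable)
  haveI h2 : IsProbabilityMeasure (P.map (fun ω => fun s : {s : ℤ // s ≤ t} => Z s ω)) :=
    Measure.isProbabilityMeasure_map ((meas_past_meas Z hZmeas t).aemeasurable)
  haveI h3 : IsProbabilityMeasure (P.map (fun ω => fun s : {s : ℤ // t + k ≤ s} => Z s ω)) :=
    Measure.isProbabilityMeasure_map ((meas_fut_meas Z hZmeas t k).aemeasurable)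
  refine meas_le_meas_add_tvDist _ _ hF ?_
  have hbdd : BddAbove (Set.range fun t' : ℤ => tvDist
      (P.map (fun ω => (fun s : {s : ℤ // s ≤ t'} => Z s ω,
                        fun s : {s : ℤ // t' + k ≤ s} => Z s ω)))
      ((P.map (fun ω => fun s : {s : ℤ // s ≤ t'} => Z s ω)).prod
        (P.map (fun ω => fun s : {s : ℤ // t' + k ≤ s} => Z s ω)))) := by
    refine ⟨2, ?_⟩
    rintro x ⟨t', rfl⟩
    haveI g1 : IsProbabilityMeasure (P.map (fun ω => (fun s : {s : ℤ // s ≤ t'} => Z s ω,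
        fun s : {s : ℤ // t' + k ≤ s} => Z s ω))) :=
      Measure.isProbabilityMeasure_map (((meas_past_meas Z hZmeas t').prodMk
        (meas_fut_meas Z hZmeas t' k)).aemeasurable)
    haveI g2 : IsProbabilityMeasure (P.map (fun ω => fun s : {s : ℤ // s ≤ t'} => Z s ω)) :=
      Measure.isProbabilityMeasure_map ((meas_past_meas Z hZmeas t').aemeasurable)
    haveI g3 : IsProbabilityMeasure (P.map (fun ω => fun s : {s : ℤ // t' + k ≤ s} => Z s ω)) :=
      Measure.isProbabilityMeasure_map ((meas_fut_meas Z hZmeas t' k).aemeasurable)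
    exact tvDist_le_two _ _
  exact le_ciSup hbdd t

lemma betaMix_nonneg (k : ℕ) : 0 ≤ betaMix P Z k := by
  haveI h1 : IsProbabilityMeasure (P.map (fun ω => (fun s : {s : ℤ // s ≤ (0:ℤ)} => Z s ω,
      fun s : {s : ℤ // (0:ℤ) + k ≤ s} => Z s ω))) :=
    Measure.isProbabilityMeasure_map (((meas_past_meas Z hZmeas 0).prodMk
      (meas_fut_meas Z hZmeas 0 k)).aemeasurable)
  haveI h2 : IsProbabilityMeasure (P.map (fun ω => fun s : {s : ℤ // s ≤ (0:ℤ)} => Z s ω)) :=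
    Measure.isProbabilityMeasure_map ((meas_past_meas Z hZmeas 0).aemeasurable)
  haveI h3 : IsProbabilityMeasure (P.map (fun ω => fun s : {s : ℤ // (0:ℤ) + k ≤ s} => Z s ω)) :=
    Measure.isProbabilityMeasure_map ((meas_fut_meas Z hZmeas 0 k).aemeasurable)
  have h0 : (0:ℝ) ≤ tvDist
      (P.map (fun ω => (fun s : {s : ℤ // s ≤ (0:ℤ)} => Z s ω,
                        fun s : {s : ℤ // (0:ℤ) + k ≤ s} => Z s ω)))
      ((P.map (fun ω => fun s : {s : ℤ // s ≤ (0:ℤ)} => Z s ω)).prod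
        (P.map (fun ω => fun s : {s : ℤ // (0:ℤ) + k ≤ s} => Z s ω))) := tvDist_nonneg _ _
  have hbdd : BddAbove (Set.range fun t' : ℤ => tvDist
      (P.map (fun ω => (fun s : {s : ℤ // s ≤ t'} => Z s ω,
                        fun s : {s : ℤ // t' + k ≤ s} => Z s ω)))
      ((P.map (fun ω => fun s : {s : ℤ // s ≤ t'} => Z s ω)).prod
        (P.map (fun ω => fun s : {s : ℤ // t' + k ≤ s} => Z s ω)))) := by
    refine ⟨2, ?_⟩
    rintro x ⟨t', rfl⟩
    haveI g1 : IsProbabilityMeasure (P.map (fun ω => (fun s : {s : ℤ // s ≤ t'} => Z s ω,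
        fun s : {s : ℤ // t' + k ≤ s} => Z s ω))) :=
      Measure.isProbabilityMeasure_map (((meas_past_meas Z hZmeas t').prodMk
        (meas_fut_meas Z hZmeas t' k)).aemeasurable)
    haveI g2 : IsProbabilityMeasure (P.map (fun ω => fun s : {s : ℤ // s ≤ t'} => Z s ω)) :=
      Measure.isProbabilityMeasure_map ((meas_past_meas Z hZmeas t').aemeasurable)
    haveI g3 : IsProbabilityMeasure (P.map (fun ω => fun s : {s : ℤ // t' + k ≤ s} => Z s ω)) :=
      Measure.isProbabilityMeasure_map ((meas_fut_meas Z hZmeas t' k).aemeasurable)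
    exact tvDist_le_two _ _
  exact le_trans h0 (le_ciSup hbdd 0)

end Beta


section Stat
variable {Ω 𝒵 : Type*} [MeasurableSpace Ω] [MeasurableSpace 𝒵]
    (P : Measure Ω) (Z : ℤ → Ω → 𝒵) (hZmeas : ∀ t, Measurable (Z t))

include hZmeas

lemma map_Z_eq (hstat : Stationary P Z) (t : ℤ) : P.map (Z t) = P.map (Z 1) := by
  have h := hstat (t - 1)
  have hmeas1 : Measurable (fun g : ℤ → 𝒵 => g 1) := measurable_pi_apply 1
  have hml : Measurable (fun ω => fun u : ℤ => Z (u + (t - 1)) ω) :=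
    measurable_pi_lambda _ fun u => hZmeas _
  have hmr : Measurable (fun ω => fun u : ℤ => Z u ω) :=
    measurable_pi_lambda _ fun u => hZmeas _
  calc P.map (Z t)
      = (P.map (fun ω => fun u : ℤ => Z (u + (t - 1)) ω)).map (fun g => g 1) := by
        rw [Measure.map_map hmeas1 hml]
        congr 1
        funext ω
        exact congrFun (congrArg Z (by ring)) ω
    _ = (P.map (fun ω => fun u : ℤ => Z u ω)).map (fun g => g 1) := by rw [h]
    _ = P.map (Z 1) := by rw [Measure.map_map hmeas1 hmr]; rfl

end Stat


section Decouple
variable {Ω 𝒵 : Type*} [MeasurableSpace Ω] [MeasurableSpace 𝒵]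
    (P : Measure Ω) [IsProbabilityMeasure P]
    (Z : ℤ → Ω → 𝒵) (hZmeas : ∀ t, Measurable (Z t))

include hZmeas

lemma joint_meas (m : ℕ) (s : ℤ) (a : ℕ) :
    Measurable (fun ω (k : Fin m) => Z (s + ((k : ℕ) * a : ℕ)) ω) :=
  measurable_pi_lambda _ fun k => hZmeas _

lemma decouple (hstat : Stationary P Z) (a : ℕ) :
    ∀ (m : ℕ) (s : ℤ) (E : Set (Fin m → 𝒵)), MeasurableSet E →
    (P.map (fun ω (k : Fin m) => Z (s + ((k : ℕ) * a : ℕ)) ω)) E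
      ≤ (Measure.pi fun _ : Fin m => P.map (Z 1)) E
        + ((m - 1 : ℕ) : ENNReal) * ENNReal.ofReal (betaMix P Z a) := by
  haveI hνprob : IsProbabilityMeasure (P.map (Z 1)) :=
    Measure.isProbabilityMeasure_map (hZmeas 1).aemeasurable
  intro m
  induction m with
  | zero =>
    intro s E hE
    rcases Set.eq_empty_or_nonempty E with rfl | hne
    · simp
    · obtain ⟨w, hw⟩ := hne
      have hEu : E = Set.univ := Set.eq_univ_of_forall (fun v => (Subsingleton.elim w v) ▸ hw)
      subst hEu
      haveI : IsProbabilityMeasure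
          (P.map (fun ω (k : Fin 0) => Z (s + ((k : ℕ) * a : ℕ)) ω)) :=
        Measure.isProbabilityMeasure_map (joint_meas Z hZmeas 0 s a).aemeasurable
      have h1 : (P.map (fun ω (k : Fin 0) => Z (s + ((k : ℕ) * a : ℕ)) ω)) Set.univ = 1 :=
        measure_univ
      have h2 : (Measure.pi fun _ : Fin 0 => P.map (Z 1)) Set.univ = 1 := measure_univ
      rw [h1, h2]
      simp
  | succ n ih =>
    cases n with
    | zero =>
      -- m = 1 : the joint law IS the product law
      intro s E hE
      have hmap : P.map (fun ω (k : Fin 1) => Z (s + ((k : ℕ) * a : ℕ)) ω)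
          = Measure.pi (fun _ : Fin 1 => P.map (Z 1)) := by
        set e := MeasurableEquiv.funUnique (Fin 1) 𝒵 with he
        have hp := measurePreserving_funUnique (P.map (Z 1)) (Fin 1)
        have hps := (hp.symm e).map_eq
        calc P.map (fun ω (k : Fin 1) => Z (s + ((k : ℕ) * a : ℕ)) ω)
            = P.map (⇑e.symm ∘ Z s) := by
              congr 1
              funext ω
              funext k
              have hk : (k : ℕ) = 0 := by omega
              simp [e, MeasurableEquiv.funUnique, hk]
          _ = (P.map (Z s)).map e.symm := (Measure.map_map e.symm.measurable (hZmeas s)).symm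
          _ = (P.map (Z 1)).map e.symm := by rw [map_Z_eq P Z hZmeas hstat s]
          _ = Measure.pi (fun _ : Fin 1 => P.map (Z 1)) := hps
      rw [hmap]
      simp
    | succ n' =>
      intro s E hE
      set ν := P.map (Z 1) with hν
      set β' := ENNReal.ofReal (betaMix P Z a) with hβ'
      set e : (Fin (n' + 2) → 𝒵) ≃ᵐ 𝒵 × (Fin (n' + 1) → 𝒵) :=
        MeasurableEquiv.piFinSuccAbove (fun _ => 𝒵) 0 with he
      set F : Set (𝒵 × (Fin (n' + 1) → 𝒵)) := ⇑e.symm ⁻¹' E with hFdef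
      have hF : MeasurableSet F := e.symm.measurable hE
      have h0 : ∀ μ : Measure (Fin (n' + 2) → 𝒵), μ E = (μ.map e) F := by
        intro μ
        rw [MeasurableEquiv.map_apply]
        congr 1
        ext v
        simp [hFdef]
      -- measurability helpers
      have hg₁ : Measurable (fun q : {s' : ℤ // s' ≤ s} → 𝒵 => q ⟨s, le_refl s⟩) :=
        measurable_pi_apply _
      have hpf : ∀ j : Fin (n' + 1), s + (a : ℤ) ≤ s + ((((j : ℕ) + 1) * a : ℕ) : ℤ) := by
        intro j
        have h1 : a ≤ ((j : ℕ) + 1) * a := Nat.le_mul_of_pos_left a (Nat.succ_pos _)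
        have h2 : (a : ℤ) ≤ ((((j : ℕ) + 1) * a : ℕ) : ℤ) := by exact_mod_cast h1
        omega
      set g₂ : ({s' : ℤ // s + (a : ℤ) ≤ s'} → 𝒵) → (Fin (n' + 1) → 𝒵) :=
        fun q j => q ⟨s + ((((j : ℕ) + 1) * a : ℕ) : ℤ), hpf j⟩ with hg₂def
      have hg₂ : Measurable g₂ := measurable_pi_lambda _ fun j => measurable_pi_apply _
      have hpast : Measurable (fun ω => fun s' : {s' : ℤ // s' ≤ s} => Z s' ω) :=
        measurable_pi_lambda _ fun s' => hZmeas _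
      have hfut : Measurable (fun ω => fun s' : {s' : ℤ // s + (a : ℤ) ≤ s'} => Z s' ω) :=
        measurable_pi_lambda _ fun s' => hZmeas _
      have hvec : Measurable (fun ω (j : Fin (n' + 1)) => Z (s + ((((j : ℕ) + 1) * a : ℕ) : ℤ)) ω) :=
        measurable_pi_lambda _ fun j => hZmeas _
      have hpm : Measurable (Prod.map (fun q : {s' : ℤ // s' ≤ s} → 𝒵 => q ⟨s, le_refl s⟩) g₂) :=
        (hg₁.comp measurable_fst).prodMk (hg₂.comp measurable_snd)
      -- step 1 : rewrite the joint law through e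
      have h1 : (P.map (fun ω (k : Fin (n' + 2)) => Z (s + ((k : ℕ) * a : ℕ)) ω)).map e
          = P.map (fun ω => (Z s ω,
              fun j : Fin (n' + 1) => Z (s + ((((j : ℕ) + 1) * a : ℕ) : ℤ)) ω)) := by
        rw [Measure.map_map e.measurable (joint_meas Z hZmeas (n' + 2) s a)]
        congr 1
        funext ω
        show e (fun k : Fin (n' + 2) => Z (s + ((k : ℕ) * a : ℕ)) ω) = _
        have : ∀ v : Fin (n' + 2) → 𝒵, e v = (v 0, fun j => v j.succ) := by
          intro v
          simp only [he, MeasurableEquiv.piFinSuccAbove, Fin.insertNthEquiv, Fin.removeNth,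
            Fin.zero_succAbove, MeasurableEquiv.coe_mk, Equiv.coe_fn_symm_mk]
          rfl
        rw [this]
        refine Prod.ext ?_ ?_
        · show Z (s + (((0 : Fin (n' + 2)) : ℕ) * a : ℕ)) ω = Z s ω
          norm_num
        · funext j
          show Z (s + (((j.succ : ℕ)) * a : ℕ)) ω = _
          norm_num [Fin.val_succ]
      -- step 2 : the pair law is a pushforward of the betaMix pair law
      have h2 : P.map (fun ω => (Z s ω,
            fun j : Fin (n' + 1) => Z (s + ((((j : ℕ) + 1) * a : ℕ) : ℤ)) ω))
          = (P.map (fun ω => (fun s' : {s' : ℤ // s' ≤ s} => Z s' ω,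
              fun s' : {s' : ℤ // s + (a : ℤ) ≤ s'} => Z s' ω))).map
              (Prod.map (fun q : {s' : ℤ // s' ≤ s} → 𝒵 => q ⟨s, le_refl s⟩) g₂) := by
        rw [Measure.map_map hpm (hpast.prodMk hfut)]
        rfl
      -- step 3 : compare with the product law via betaMix
      have h3 : (P.map (fun ω => (fun s' : {s' : ℤ // s' ≤ s} => Z s' ω,
            fun s' : {s' : ℤ // s + (a : ℤ) ≤ s'} => Z s' ω)))
            ((Prod.map (fun q : {s' : ℤ // s' ≤ s} → 𝒵 => q ⟨s, le_refl s⟩) g₂) ⁻¹' F)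
          ≤ ((P.map (fun ω => fun s' : {s' : ℤ // s' ≤ s} => Z s' ω)).prod
              (P.map (fun ω => fun s' : {s' : ℤ // s + (a : ℤ) ≤ s'} => Z s' ω)))
              ((Prod.map (fun q : {s' : ℤ // s' ≤ s} → 𝒵 => q ⟨s, le_refl s⟩) g₂) ⁻¹' F)
            + β' :=
        pair_le_prod_add_beta P Z hZmeas s a (hpm hF)
      -- step 4 : identify the mapped product law
      haveI : IsProbabilityMeasure (P.map (fun ω => fun s' : {s' : ℤ // s' ≤ s} => Z s' ω)) :=
        Measure.isProbabilityMeasure_map hpast.aemeasurable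
      haveI : IsProbabilityMeasure
          (P.map (fun ω => fun s' : {s' : ℤ // s + (a : ℤ) ≤ s'} => Z s' ω)) :=
        Measure.isProbabilityMeasure_map hfut.aemeasurable
      have h4 : ((P.map (fun ω => fun s' : {s' : ℤ // s' ≤ s} => Z s' ω)).prod
            (P.map (fun ω => fun s' : {s' : ℤ // s + (a : ℤ) ≤ s'} => Z s' ω)))
            ((Prod.map (fun q : {s' : ℤ // s' ≤ s} → 𝒵 => q ⟨s, le_refl s⟩) g₂) ⁻¹' F)
          = (ν.prod (P.map (fun ω (j : Fin (n' + 1)) =>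
              Z ((s + (a : ℤ)) + ((((j : ℕ)) * a : ℕ) : ℤ)) ω))) F := by
        rw [← Measure.map_apply hpm hF, ← Measure.map_prod_map _ _ hg₁ hg₂]
        have hc1 : (P.map (fun ω => fun s' : {s' : ℤ // s' ≤ s} => Z s' ω)).map
            (fun q : {s' : ℤ // s' ≤ s} → 𝒵 => q ⟨s, le_refl s⟩) = ν := by
          rw [Measure.map_map hg₁ hpast]
          have : (fun q : {s' : ℤ // s' ≤ s} → 𝒵 => q ⟨s, le_refl s⟩) ∘
              (fun ω => fun s' : {s' : ℤ // s' ≤ s} => Z s' ω) = Z s := rfl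
          rw [this, map_Z_eq P Z hZmeas hstat s]
        have hc2 : (P.map (fun ω => fun s' : {s' : ℤ // s + (a : ℤ) ≤ s'} => Z s' ω)).map g₂
            = P.map (fun ω (j : Fin (n' + 1)) =>
                Z ((s + (a : ℤ)) + ((((j : ℕ)) * a : ℕ) : ℤ)) ω) := by
          rw [Measure.map_map hg₂ hfut]
          congr 1
          funext ω
          funext j
          show Z (s + ((((j : ℕ) + 1) * a : ℕ) : ℤ)) ω = _
          refine congrFun (congrArg Z ?_) ω
          push_cast
          ring
        rw [hc1, hc2]
      -- step 5 : apply the induction hypothesis inside the product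
      have h5 : (ν.prod (P.map (fun ω (j : Fin (n' + 1)) =>
            Z ((s + (a : ℤ)) + ((((j : ℕ)) * a : ℕ) : ℤ)) ω))) F
          ≤ (ν.prod (Measure.pi fun _ : Fin (n' + 1) => ν)) F + ((n' : ENNReal)) * β' := by
        haveI : IsProbabilityMeasure (P.map (fun ω (j : Fin (n' + 1)) =>
            Z ((s + (a : ℤ)) + ((((j : ℕ)) * a : ℕ) : ℤ)) ω)) :=
          Measure.isProbabilityMeasure_map (joint_meas Z hZmeas (n' + 1) (s + a) a).aemeasurable
        rw [Measure.prod_apply hF, Measure.prod_apply hF]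
        have hmono : ∫⁻ x, (P.map (fun ω (j : Fin (n' + 1)) =>
              Z ((s + (a : ℤ)) + ((((j : ℕ)) * a : ℕ) : ℤ)) ω)) (Prod.mk x ⁻¹' F) ∂ν
            ≤ ∫⁻ x, ((Measure.pi fun _ : Fin (n' + 1) => ν) (Prod.mk x ⁻¹' F)
                + ((n' : ENNReal)) * β') ∂ν := by
          refine lintegral_mono fun x => ?_
          have := ih (s + a) (Prod.mk x ⁻¹' F) (measurable_prodMk_left hF)
          simpa using this
        refine hmono.trans ?_
        rw [lintegral_add_right _ measurable_const, lintegral_const, measure_univ, mul_one]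
      -- step 6 : identify the full product measure
      have h6 : (ν.prod (Measure.pi fun _ : Fin (n' + 1) => ν)) F
          = (Measure.pi fun _ : Fin (n' + 2) => ν) E := by
        have hmp := measurePreserving_piFinSuccAbove (fun _ : Fin (n' + 2) => ν) 0
        rw [h0 (Measure.pi fun _ : Fin (n' + 2) => ν)]
        rw [hmp.map_eq]
      -- chain everything
      calc (P.map (fun ω (k : Fin (n' + 2)) => Z (s + ((k : ℕ) * a : ℕ)) ω)) E
          = ((P.map (fun ω (k : Fin (n' + 2)) => Z (s + ((k : ℕ) * a : ℕ)) ω)).map e) F :=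
            h0 _
        _ = (P.map (fun ω => (fun s' : {s' : ℤ // s' ≤ s} => Z s' ω,
              fun s' : {s' : ℤ // s + (a : ℤ) ≤ s'} => Z s' ω)))
              ((Prod.map (fun q : {s' : ℤ // s' ≤ s} → 𝒵 => q ⟨s, le_refl s⟩) g₂) ⁻¹' F) := by
            rw [h1, h2, Measure.map_apply hpm hF]
        _ ≤ ((P.map (fun ω => fun s' : {s' : ℤ // s' ≤ s} => Z s' ω)).prod
              (P.map (fun ω => fun s' : {s' : ℤ // s + (a : ℤ) ≤ s'} => Z s' ω)))
              ((Prod.map (fun q : {s' : ℤ // s' ≤ s} → 𝒵 => q ⟨s, le_refl s⟩) g₂) ⁻¹' F)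
            + β' := h3
        _ = (ν.prod (P.map (fun ω (j : Fin (n' + 1)) =>
              Z ((s + (a : ℤ)) + ((((j : ℕ)) * a : ℕ) : ℤ)) ω))) F + β' := by rw [h4]
        _ ≤ ((ν.prod (Measure.pi fun _ : Fin (n' + 1) => ν)) F + ((n' : ENNReal)) * β') + β' :=
            add_le_add_left h5 _
        _ = (Measure.pi fun _ : Fin (n' + 2) => ν) E
            + (((n' + 2 - 1 : ℕ) : ENNReal)) * β' := by
            rw [h6]
            have : ((n' + 2 - 1 : ℕ) : ENNReal) = (n' : ENNReal) + 1 := by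
              push_cast
              ring
            rw [this]
            ring
end Decouple


section Chernoff
variable {𝒵 : Type*} [MeasurableSpace 𝒵]

lemma lintegral_pi_prod_pow (ν : Measure 𝒵) [IsProbabilityMeasure ν]
    (g : 𝒵 → ENNReal) (hg : Measurable g) (m : ℕ) :
    ∫⁻ v, ∏ k : Fin m, g (v k) ∂(Measure.pi fun _ : Fin m => ν)
      = (∫⁻ z, g z ∂ν) ^ m := by
  induction m with
  | zero => simp
  | succ n ih =>
    set e : (Fin (n + 1) → 𝒵) ≃ᵐ 𝒵 × (Fin n → 𝒵) :=
      MeasurableEquiv.piFinSuccAbove (fun _ => 𝒵) 0 with he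
    have hev : ∀ v : Fin (n + 1) → 𝒵, e v = (v 0, fun j => v j.succ) := by
      intro v
      simp only [he, MeasurableEquiv.piFinSuccAbove, Fin.insertNthEquiv, Fin.removeNth,
        Fin.zero_succAbove, MeasurableEquiv.coe_mk, Equiv.coe_fn_symm_mk]
      rfl
    have hmp := measurePreserving_piFinSuccAbove (fun _ : Fin (n + 1) => ν) 0
    have hH : Measurable (fun p : 𝒵 × (Fin n → 𝒵) => g p.1 * ∏ j : Fin n, g (p.2 j)) := by
      refine (hg.comp measurable_fst).mul ?_
      exact Finset.measurable_prod _ fun j _ => hg.comp ((measurable_pi_apply j).comp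
        measurable_snd)
    calc ∫⁻ v, ∏ k : Fin (n + 1), g (v k) ∂(Measure.pi fun _ : Fin (n + 1) => ν)
        = ∫⁻ v, (fun p : 𝒵 × (Fin n → 𝒵) => g p.1 * ∏ j : Fin n, g (p.2 j)) (e v)
            ∂(Measure.pi fun _ : Fin (n + 1) => ν) := by
          refine lintegral_congr fun v => ?_
          rw [hev v, Fin.prod_univ_succ]
      _ = ∫⁻ p, g p.1 * ∏ j : Fin n, g (p.2 j)
            ∂(ν.prod (Measure.pi fun _ : Fin n => ν)) := hmp.lintegral_comp hH
      _ = (∫⁻ z, g z ∂ν) * ∫⁻ w, ∏ j : Fin n, g (w j) ∂(Measure.pi fun _ : Fin n => ν) := by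
          exact lintegral_prod_mul hg.aemeasurable
            (Finset.measurable_prod _ fun j _ => hg.comp (measurable_pi_apply j)).aemeasurable
      _ = (∫⁻ z, g z ∂ν) ^ (n + 1) := by rw [ih, pow_succ, mul_comm]

lemma chernoff_bound (ν : Measure 𝒵) [IsProbabilityMeasure ν]
    (f : 𝒵 → ℝ) (hf : Measurable f) (M : ℝ) (hM : 0 < M)
    (hfb : ∀ z, f z ∈ Set.Icc (0 : ℝ) M)
    (m : ℕ) (hm : 0 < m) (A : ℝ) (hA : 0 < A)
    {L : ℝ} (hL : L = ∫ z, f z ∂ν) (hLpos : 0 < L) :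
    (Measure.pi fun _ : Fin m => ν)
        {v | ∑ k : Fin m, f (v k) ≤ m * L - Real.sqrt (2 * M * m * L * A)}
      ≤ ENNReal.ofReal (Real.exp (-A)) := by
  have hmR : (0 : ℝ) < (m : ℝ) := Nat.cast_pos.mpr hm
  set s : ℝ := Real.sqrt (2 * A / (m * M * L)) with hsdef
  have hs2 : s ^ 2 = 2 * A / (m * M * L) := Real.sq_sqrt (by positivity)
  have hspos : 0 < s := Real.sqrt_pos.mpr (by positivity)
  set t : ℝ := Real.sqrt (2 * M * m * L * A) with htdef
  have ht_eq : t = (m * M * L) * s := by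
    rw [htdef, show 2 * M * (m : ℝ) * L * A = (((m : ℝ) * M * L) * s) ^ 2 by
      rw [mul_pow, hs2]; field_simp]
    exact Real.sqrt_sq (by positivity)
  have hst : s * t = 2 * A := by
    rw [ht_eq, show s * ((m : ℝ) * M * L * s) = ((m : ℝ) * M * L) * s ^ 2 by ring, hs2]
    field_simp
  have hmsq : (m : ℝ) * (s ^ 2 * M / 2 - s) * L = A - s * ((m : ℝ) * L) := by
    have : (m : ℝ) * (s ^ 2 * M / 2) * L = A := by
      rw [hs2]; field_simp
    nlinarith [this]
  set Q := Measure.pi fun _ : Fin m => ν with hQ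
  set g : 𝒵 → ENNReal := fun z => ENNReal.ofReal (Real.exp (-(s * f z))) with hgdef
  have hgmeas : Measurable g :=
    ENNReal.measurable_ofReal.comp ((hf.const_mul s).neg.exp)
  set G : (Fin m → 𝒵) → ENNReal := fun v => ∏ k : Fin m, g (v k) with hGdef
  have hGmeas : Measurable G :=
    Finset.measurable_prod _ fun k _ => hgmeas.comp (measurable_pi_apply k)
  set r : ENNReal := ENNReal.ofReal (Real.exp (s * t - s * ((m : ℝ) * L))) with hrdef
  have hrpos : r ≠ 0 := by
    simp only [hrdef, ne_eq, ENNReal.ofReal_eq_zero, not_le]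
    exact Real.exp_pos _
  have hrtop : r ≠ ⊤ := ENNReal.ofReal_ne_top
  -- event is contained in the Markov event
  have hsub : {v : Fin m → 𝒵 | ∑ k : Fin m, f (v k) ≤ m * L - t} ⊆ {v | r ≤ G v} := by
    intro v hv
    simp only [Set.mem_setOf_eq] at hv ⊢
    have hprod : G v = ENNReal.ofReal (Real.exp (-(s * ∑ k : Fin m, f (v k)))) := by
      show (∏ k : Fin m, g (v k)) = _
      simp only [hgdef]
      rw [← ENNReal.ofReal_prod_of_nonneg (fun k _ => (Real.exp_pos _).le), ← Real.exp_sum]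
      congr 2
      rw [Finset.mul_sum, Finset.sum_neg_distrib]
    rw [hprod, hrdef]
    refine ENNReal.ofReal_le_ofReal (Real.exp_le_exp.mpr ?_)
    have := mul_le_mul_of_nonneg_left hv hspos.le
    nlinarith [this]
  -- Markov inequality
  have hmarkov : r * Q {v | r ≤ G v} ≤ ∫⁻ v, G v ∂Q :=
    mul_meas_ge_le_lintegral₀ hGmeas.aemeasurable r
  have hQev : r * Q {v : Fin m → 𝒵 | ∑ k : Fin m, f (v k) ≤ m * L - t}
      ≤ ∫⁻ v, G v ∂Q :=
    le_trans (mul_le_mul_right (measure_mono hsub) r) hmarkov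
  -- mgf bound
  have hint_f : Integrable f ν := by
    refine Integrable.mono' (integrable_const M) hf.aestronglyMeasurable
      (ae_of_all _ fun z => ?_)
    rw [Real.norm_eq_abs, abs_of_nonneg (hfb z).1]
    exact (hfb z).2
  have hpt : ∀ z, Real.exp (-(s * f z)) ≤ 1 + (s ^ 2 * M / 2 - s) * f z := by
    intro z
    obtain ⟨hz0, hzM⟩ := hfb z
    have h1 := exp_neg_le_quadratic (x := s * f z) (by positivity)
    have hff : f z * f z ≤ M * f z := mul_le_mul_of_nonneg_right hzM hz0
    have h2 : (s * f z) ^ 2 ≤ s ^ 2 * M * f z := by nlinarith [hff, sq_nonneg s]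
    nlinarith
  have hh_int : Integrable (fun z => 1 + (s ^ 2 * M / 2 - s) * f z) ν :=
    (integrable_const 1).add (hint_f.const_mul _)
  have hmgf : ∫⁻ z, g z ∂ν ≤ ENNReal.ofReal (Real.exp ((s ^ 2 * M / 2 - s) * L)) := by
    calc ∫⁻ z, g z ∂ν
        ≤ ∫⁻ z, ENNReal.ofReal (1 + (s ^ 2 * M / 2 - s) * f z) ∂ν :=
          lintegral_mono fun z => ENNReal.ofReal_le_ofReal (hpt z)
      _ = ENNReal.ofReal (∫ z, (1 + (s ^ 2 * M / 2 - s) * f z) ∂ν) :=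
          (ofReal_integral_eq_lintegral_ofReal hh_int
            (ae_of_all _ fun z => le_trans (Real.exp_pos _).le (hpt z))).symm
      _ = ENNReal.ofReal (1 + (s ^ 2 * M / 2 - s) * L) := by
          rw [integral_add (integrable_const 1) (hint_f.const_mul _), integral_const,
            integral_const_mul, probReal_univ, hL]
          simp
      _ ≤ ENNReal.ofReal (Real.exp ((s ^ 2 * M / 2 - s) * L)) := by
          refine ENNReal.ofReal_le_ofReal ?_
          have := Real.add_one_le_exp ((s ^ 2 * M / 2 - s) * L)
          linarith
  -- put everything together
  have hlint : ∫⁻ v, G v ∂Q ≤ ENNReal.ofReal (Real.exp (-A)) * r := by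
    calc ∫⁻ v, G v ∂Q = (∫⁻ z, g z ∂ν) ^ m := lintegral_pi_prod_pow ν g hgmeas m
      _ ≤ (ENNReal.ofReal (Real.exp ((s ^ 2 * M / 2 - s) * L))) ^ m :=
          pow_le_pow_left' hmgf m
      _ = ENNReal.ofReal ((Real.exp ((s ^ 2 * M / 2 - s) * L)) ^ m) :=
          (ENNReal.ofReal_pow (Real.exp_pos _).le m).symm
      _ = ENNReal.ofReal (Real.exp ((m : ℝ) * ((s ^ 2 * M / 2 - s) * L))) := by
          rw [← Real.exp_nat_mul]
      _ = ENNReal.ofReal (Real.exp (-A) * Real.exp (s * t - s * ((m : ℝ) * L))) := by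
          rw [← Real.exp_add]
          congr 1
          rw [Real.exp_eq_exp]
          linear_combination hmsq - hst
      _ = ENNReal.ofReal (Real.exp (-A)) * r := by
          rw [hrdef, ENNReal.ofReal_mul (Real.exp_pos _).le]
  have hfinal : r * Q {v : Fin m → 𝒵 | ∑ k : Fin m, f (v k) ≤ m * L - t}
      ≤ r * ENNReal.ofReal (Real.exp (-A)) := by
    refine le_trans hQev (le_trans hlint ?_)
    rw [mul_comm]
  exact (ENNReal.mul_le_mul_iff_right hrpos hrtop).mp hfinal

end Chernoff


/-- Fast-rate uniform error bound for quantized dynamical models (Theorem 3 in the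
paper): with probability at least `1 - δ`, simultaneously for all `f ∈ ℱ`, the risk
`L f = E[f (Z 1)]` is bounded by `L̂ f + √(2MA·L̂ f/μ') + 4MA/μ'`, where `L̂ f` is the
empirical risk on the spaced sample `(Z 1, Z (1+a), …, Z (1+(μ'-1)a))`,
`A = Bp ln 2 + ln(1/δ'')` and `δ'' = δ - (μ'-1)β(a) > 0`. -/
theorem fast_rate_bound_quantized_dynamical
    {Ω 𝒵 : Type*} [MeasurableSpace Ω] [MeasurableSpace 𝒵]
    (P : Measure Ω) [IsProbabilityMeasure P]
    (Z : ℤ → Ω → 𝒵) (hZmeas : ∀ t, Measurable (Z t))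
    (hstat : Stationary P Z)
    (a μ' : ℕ) (ha : 1 ≤ a) (hμ' : 1 ≤ μ')
    (M : ℝ) (hM : 0 < M)
    (B p : ℕ) (hB : 0 < B) (hp : 0 < p)
    (ℱ : Finset (𝒵 → ℝ))
    (hFmeas : ∀ f ∈ ℱ, Measurable f)
    (hFbdd : ∀ f ∈ ℱ, ∀ z, f z ∈ Set.Icc (0 : ℝ) M)
    (hcard : ℱ.card ≤ 2 ^ (B * p))
    (δ : ℝ) (hδ : δ ∈ Set.Ioo (0 : ℝ) 1)
    (hδ'' : 0 < δ - ((μ' : ℝ) - 1) * betaMix P Z a)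
    (A : ℝ)
    (hA : A = B * p * Real.log 2 + Real.log (1 / (δ - ((μ' : ℝ) - 1) * betaMix P Z a))) :
    1 - δ ≤ (P {ω | ∀ f ∈ ℱ,
        ∫ ω', f (Z 1 ω') ∂P
          ≤ (1 / μ') * ∑ k : Fin μ', f (Z ((1 + (k : ℕ) * a : ℕ) : ℤ) ω)
            + Real.sqrt (2 * M * A
                * ((1 / μ') * ∑ k : Fin μ', f (Z ((1 + (k : ℕ) * a : ℕ) : ℤ) ω)) / μ')
            + 4 * M * A / μ'}).toReal := by
  obtain ⟨hδ0, hδ1⟩ := hδ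
  have hβ0 : 0 ≤ betaMix P Z a := betaMix_nonneg P Z hZmeas a
  set β : ℝ := betaMix P Z a with hβ
  set δ'' : ℝ := δ - ((μ' : ℝ) - 1) * β with hδ''def
  have hμ'R : (1 : ℝ) ≤ (μ' : ℝ) := by exact_mod_cast hμ'
  have hμ'pos : (0 : ℝ) < (μ' : ℝ) := by linarith
  have hδ''pos : 0 < δ'' := hδ''
  have hδ''le : δ'' ≤ δ := by nlinarith
  have hδ''lt1 : δ'' < 1 := lt_of_le_of_lt hδ''le hδ1
  have hBp : (0 : ℝ) < (B : ℝ) * (p : ℝ) := by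
    have h1 : (0:ℝ) < (B:ℝ) := by exact_mod_cast hB
    have h2 : (0:ℝ) < (p:ℝ) := by exact_mod_cast hp
    positivity
  have hApos : 0 < A := by
    rw [hA]
    have h2 : 0 < Real.log 2 := Real.log_pos (by norm_num)
    have h3 : 0 < Real.log (1 / δ'') := by
      refine Real.log_pos ?_
      rw [lt_div_iff₀ hδ''pos]
      linarith
    have := mul_pos hBp h2
    linarith
  set ν := P.map (Z 1) with hν
  haveI : IsProbabilityMeasure ν := Measure.isProbabilityMeasure_map (hZmeas 1).aemeasurable
  have hrisk : ∀ f ∈ ℱ, (∫ ω', f (Z 1 ω') ∂P) = ∫ z, f z ∂ν := fun f hf =>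
    (integral_map (hZmeas 1).aemeasurable (hFmeas f hf).aestronglyMeasurable).symm
  set S : Ω → (Fin μ' → 𝒵) := fun ω k => Z ((1 + (k : ℕ) * a : ℕ) : ℤ) ω with hS
  have hSmeas : Measurable S := measurable_pi_lambda _ fun k => hZmeas _
  set C : (𝒵 → ℝ) → Set (Fin μ' → 𝒵) := fun f =>
    {v | (∫ ω', f (Z 1 ω') ∂P)
        ≤ (1 / μ') * ∑ k : Fin μ', f (v k)
          + Real.sqrt (2 * M * A * ((1 / μ') * ∑ k : Fin μ', f (v k)) / μ')
          + 4 * M * A / μ'} with hC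
  have hCmeas : ∀ f ∈ ℱ, MeasurableSet (C f) := by
    intro f hf
    have hsum : Measurable fun v : Fin μ' → 𝒵 => ∑ k : Fin μ', f (v k) :=
      Finset.measurable_sum _ fun k _ => (hFmeas f hf).comp (measurable_pi_apply k)
    have hg : Measurable fun v : Fin μ' → 𝒵 =>
        (1 / (μ' : ℝ)) * ∑ k : Fin μ', f (v k)
          + Real.sqrt (2 * M * A * ((1 / (μ' : ℝ)) * ∑ k : Fin μ', f (v k)) / μ')
          + 4 * M * A / μ' := by
      refine ((hsum.const_mul _).add ?_).add measurable_const
      exact Real.continuous_sqrt.measurable.comp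
        (((hsum.const_mul ((1 : ℝ) / μ')).const_mul (2 * M * A)).div_const _)
    exact measurableSet_le measurable_const hg
  set D : Set (Fin μ' → 𝒵) := ⋂ f ∈ ℱ, C f with hD
  have hDmeas : MeasurableSet D := MeasurableSet.biInter ℱ.countable_toSet
    (fun f hf => hCmeas f hf)
  have hsetEq : {ω | ∀ f ∈ ℱ,
      ∫ ω', f (Z 1 ω') ∂P
        ≤ (1 / μ') * ∑ k : Fin μ', f (Z ((1 + (k : ℕ) * a : ℕ) : ℤ) ω)
          + Real.sqrt (2 * M * A
              * ((1 / μ') * ∑ k : Fin μ', f (Z ((1 + (k : ℕ) * a : ℕ) : ℤ) ω)) / μ')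
          + 4 * M * A / μ'} = S ⁻¹' D := by
    ext ω
    simp only [Set.mem_setOf_eq, Set.mem_preimage, hD, Set.mem_iInter, hC]
    exact Iff.rfl
  have hJoint : P.map S = P.map (fun ω (k : Fin μ') => Z ((1 : ℤ) + ((k : ℕ) * a : ℕ)) ω) := by
    have hfun : S = fun ω (k : Fin μ') => Z ((1 : ℤ) + ((k : ℕ) * a : ℕ)) ω := by
      funext ω k
      exact congrFun (congrArg Z (by push_cast; ring)) ω
    rw [hfun]
  haveI : IsProbabilityMeasure (P.map S) := Measure.isProbabilityMeasure_map hSmeas.aemeasurable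
  -- per-model Chernoff bound
  have hper : ∀ f ∈ ℱ, (Measure.pi fun _ : Fin μ' => ν) ((C f)ᶜ)
      ≤ ENNReal.ofReal (Real.exp (-A)) := by
    intro f hf
    set L : ℝ := ∫ ω', f (Z 1 ω') ∂P with hLdef
    have hLν : L = ∫ z, f z ∂ν := hrisk f hf
    have hL0 : 0 ≤ L := by
      rw [hLν]
      exact integral_nonneg fun z => (hFbdd f hf z).1
    rcases eq_or_lt_of_le hL0 with hLeq | hLpos
    · have hall : ∀ v, v ∈ C f := by
        intro v
        have hx : 0 ≤ (1 / (μ' : ℝ)) * ∑ k : Fin μ', f (v k) :=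
          mul_nonneg (by positivity) (Finset.sum_nonneg fun k _ => (hFbdd f hf (v k)).1)
        have h4 : (0:ℝ) ≤ 4 * M * A / μ' := by positivity
        have hsq := Real.sqrt_nonneg
          (2 * M * A * ((1 / (μ' : ℝ)) * ∑ k : Fin μ', f (v k)) / μ')
        simp only [hC, Set.mem_setOf_eq, ← hLdef]
        linarith [hLeq.symm.le]
      have hCuniv : C f = Set.univ := Set.eq_univ_of_forall hall
      rw [hCuniv, Set.compl_univ]
      simp
    · have hsub : (C f)ᶜ ⊆ {v : Fin μ' → 𝒵 |
          ∑ k : Fin μ', f (v k) ≤ μ' * L - Real.sqrt (2 * M * μ' * L * A)} := by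
        intro v hv
        by_contra hcon
        apply hv
        simp only [Set.mem_setOf_eq] at hcon
        push_neg at hcon
        set x : ℝ := (1 / (μ' : ℝ)) * ∑ k : Fin μ', f (v k) with hxdef
        have hx0 : 0 ≤ x :=
          mul_nonneg (by positivity) (Finset.sum_nonneg fun k _ => (hFbdd f hf (v k)).1)
        set c : ℝ := M * A / μ' with hcdef
        have hc0 : 0 < c := by positivity
        -- t / μ' = √(2cL)
        have htdiv : Real.sqrt (2 * M * μ' * L * A) = Real.sqrt (2 * c * L) * μ' := by
          rw [show 2 * M * (μ' : ℝ) * L * A = (2 * c * L) * (μ' : ℝ) ^ 2 by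
            rw [hcdef]; field_simp]
          rw [Real.sqrt_mul (by positivity), Real.sqrt_sq hμ'pos.le]
        have hxL : L - Real.sqrt (2 * c * L) ≤ x := by
          have h1 : (μ' : ℝ) * L - Real.sqrt (2 * c * L) * μ' ≤ ∑ k : Fin μ', f (v k) := by
            rw [← htdiv]; linarith [hcon]
          have h2 : (L - Real.sqrt (2 * c * L)) * μ' ≤ x * μ' := by
            have hx2 : x * μ' = ∑ k : Fin μ', f (v k) := by
              rw [hxdef]; field_simp
            rw [hx2]; nlinarith [h1]
          exact le_of_mul_le_mul_right h2 hμ'pos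
        set b : ℝ := Real.sqrt (2 * c) with hbdef
        have hb0 : 0 ≤ b := Real.sqrt_nonneg _
        have hb2 : b ^ 2 = 2 * c := Real.sq_sqrt (by positivity)
        set u : ℝ := Real.sqrt L with hudef
        have hu2 : u ^ 2 = L := Real.sq_sqrt hL0
        have hbu : Real.sqrt (2 * c * L) = b * u := by
          rw [hbdef, hudef, ← Real.sqrt_mul (by positivity)]
        have hquad : u ^ 2 ≤ x + b * u := by
          rw [hu2]
          rw [hbu] at hxL
          linarith
        have hconc := quad_bound (Real.sqrt_nonneg L) hx0 hb0 hquad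
        have hbx : b * Real.sqrt x = Real.sqrt (2 * M * A * x / μ') := by
          rw [hbdef, ← Real.sqrt_mul (by positivity)]
          congr 1
          rw [hcdef]
          ring
        have h2b : 2 * b ^ 2 = 4 * M * A / μ' := by
          rw [hb2, hcdef]
          field_simp
          ring
        simp only [hC, Set.mem_setOf_eq, ← hLdef]
        rw [← hxdef]
        calc L = u ^ 2 := hu2.symm
          _ ≤ x + b * Real.sqrt x + 2 * b ^ 2 := hconc
          _ = x + Real.sqrt (2 * M * A * x / μ') + 4 * M * A / μ' := by
              rw [hbx, h2b]
      calc (Measure.pi fun _ : Fin μ' => ν) ((C f)ᶜ)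
          ≤ (Measure.pi fun _ : Fin μ' => ν) {v : Fin μ' → 𝒵 |
              ∑ k : Fin μ', f (v k) ≤ μ' * L - Real.sqrt (2 * M * μ' * L * A)} :=
            measure_mono hsub
        _ ≤ ENNReal.ofReal (Real.exp (-A)) :=
            chernoff_bound ν f (hFmeas f hf) M hM (hFbdd f hf) μ' hμ' A hApos hLν hLpos
  -- bound the bad event
  have hbad : (P.map S) Dᶜ ≤ ENNReal.ofReal δ := by
    have hexpA : Real.exp (-A) = δ'' / 2 ^ (B * p) := by
      rw [hA, neg_add, Real.exp_add]
      have h1 : Real.exp (-((B : ℝ) * (p : ℝ) * Real.log 2)) = ((2 : ℝ) ^ (B * p))⁻¹ := by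
        rw [Real.exp_neg]
        congr 1
        rw [show (B : ℝ) * (p : ℝ) = ((B * p : ℕ) : ℝ) by push_cast; ring]
        rw [Real.exp_nat_mul, Real.exp_log (by norm_num : (0:ℝ) < 2)]
      have h2 : Real.exp (-Real.log (1 / δ'')) = δ'' := by
        rw [one_div, Real.log_inv, neg_neg, Real.exp_log hδ''pos]
      rw [h1, h2]
      ring
    have hDc : Dᶜ = ⋃ f ∈ ℱ, (C f)ᶜ := by
      rw [hD]
      simp [Set.compl_iInter]
    calc (P.map S) Dᶜ
        ≤ (Measure.pi fun _ : Fin μ' => ν) Dᶜ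
            + ((μ' - 1 : ℕ) : ENNReal) * ENNReal.ofReal β := by
          rw [hJoint]
          exact decouple P Z hZmeas hstat a μ' 1 Dᶜ hDmeas.compl
      _ ≤ (∑ f ∈ ℱ, (Measure.pi fun _ : Fin μ' => ν) ((C f)ᶜ))
            + ((μ' - 1 : ℕ) : ENNReal) * ENNReal.ofReal β := by
          refine add_le_add_left ?_ _
          rw [hDc]
          exact measure_biUnion_finset_le _ _
      _ ≤ (∑ _f ∈ ℱ, ENNReal.ofReal (Real.exp (-A)))
            + ((μ' - 1 : ℕ) : ENNReal) * ENNReal.ofReal β :=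
          add_le_add_left (Finset.sum_le_sum hper) _
      _ = (ℱ.card : ENNReal) * ENNReal.ofReal (Real.exp (-A))
            + ((μ' - 1 : ℕ) : ENNReal) * ENNReal.ofReal β := by
          rw [Finset.sum_const, nsmul_eq_mul]
      _ ≤ ((2 ^ (B * p) : ℕ) : ENNReal) * ENNReal.ofReal (Real.exp (-A))
            + ((μ' - 1 : ℕ) : ENNReal) * ENNReal.ofReal β := by
          refine add_le_add_left (mul_le_mul_left ?_ _) _
          exact_mod_cast hcard
      _ = ENNReal.ofReal δ := by
          rw [hexpA]
          rw [show ((2 ^ (B * p) : ℕ) : ENNReal) = ENNReal.ofReal ((2 : ℝ) ^ (B * p)) by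
            rw [ENNReal.ofReal_pow (by norm_num : (0:ℝ) ≤ 2)]
            norm_num]
          rw [show ((μ' - 1 : ℕ) : ENNReal) = ENNReal.ofReal ((μ' : ℝ) - 1) by
            rw [← ENNReal.ofReal_natCast (μ' - 1)]
            congr 1
            push_cast [Nat.cast_sub hμ']
            ring]
          have hpow : (0:ℝ) < 2 ^ (B * p) := by positivity
          rw [← ENNReal.ofReal_mul (by positivity : (0:ℝ) ≤ (2:ℝ) ^ (B * p)),
            ← ENNReal.ofReal_mul (by linarith : (0:ℝ) ≤ (μ' : ℝ) - 1),
            ← ENNReal.ofReal_add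
              (mul_nonneg hpow.le (div_nonneg hδ''pos.le hpow.le))
              (mul_nonneg (by linarith : (0:ℝ) ≤ (μ' : ℝ) - 1) hβ0)]
          congr 1
          rw [hδ''def]
          field_simp
          ring
  -- conclude
  rw [hsetEq]
  have hPm : P (S ⁻¹' D) = (P.map S) D := (Measure.map_apply hSmeas hDmeas).symm
  rw [hPm]
  have h2 : ((P.map S) Dᶜ).toReal ≤ δ := ENNReal.toReal_le_of_le_ofReal hδ0.le hbad
  have h3 : ((P.map S) D).toReal + ((P.map S) Dᶜ).toReal = 1 := by
    have hadd := measure_add_measure_compl (μ := P.map S) hDmeas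
    rw [measure_univ] at hadd
    have hh := congrArg ENNReal.toReal hadd
    rw [ENNReal.toReal_add (measure_ne_top _ _) (measure_ne_top _ _)] at hh
    simpa using hh
  linarith
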